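/- Let φ : ℝ → ℝ be slope-restricted in [μ,ν] with μ ≤ 0 ≤ ν, and let M ∈ ℝ^{m×m} be doubly hyperdominant. Define Φ : ℝ^m → ℝ^m by Φ(ζ)_i = φ(ζ_i). Then for all ζ ∈ ℝ^m, (νζ - Φ(ζ))ᵀ M (Φ(ζ) - μζ) + (Φ(ζ) - μζ)ᵀ Mᵀ (νζ - Φ(ζ)) ≥ 0. -/
import Mathlib


open Matrix Finset

/-- Block lemma: if `M` is doubly hyperdominant when restricted to the index set `s`,
and `a`, `b` are nonnegative and similarly ordered on `s`, then the block quadratic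
form is nonnegative. -/
lemma zf_block {m : ℕ} (M : Matrix (Fin m) (Fin m) ℝ) (s : Finset (Fin m)) :
    ∀ (a b : Fin m → ℝ),
      (∀ i ∈ s, ∀ j ∈ s, i ≠ j → M i j ≤ 0) →
      (∀ i ∈ s, 0 ≤ ∑ j ∈ s, M i j) →
      (∀ j ∈ s, 0 ≤ ∑ i ∈ s, M i j) →
      (∀ i ∈ s, 0 ≤ a i) → (∀ i ∈ s, 0 ≤ b i) →
      (∀ i ∈ s, ∀ j ∈ s, 0 ≤ (a i - a j) * (b i - b j)) →
      0 ≤ ∑ i ∈ s, ∑ j ∈ s, M i j * (a i * b j) := by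
  induction s using Finset.strongInductionOn with
  | _ s ih =>
  intro a b hZ hrow hcol ha hb hsim
  rcases s.eq_empty_or_nonempty with rfl | hne
  · simp
  obtain ⟨i0, hi0, hmin⟩ := s.exists_min_image (fun i => a i + b i) hne
  have hai0 : ∀ i ∈ s, a i0 ≤ a i := by
    intro i hi
    by_contra hlt
    push_neg at hlt
    nlinarith [hsim i hi i0 hi0, hmin i hi]
  have hbi0 : ∀ i ∈ s, b i0 ≤ b i := by
    intro i hi
    by_contra hlt
    push_neg at hlt
    nlinarith [hsim i hi i0 hi0, hmin i hi]
  set a' : Fin m → ℝ := fun i => a i - a i0 with ha'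
  set b' : Fin m → ℝ := fun i => b i - b i0 with hb'
  have decomp : ∑ i ∈ s, ∑ j ∈ s, M i j * (a i * b j)
      = (a i0 * b i0) * (∑ i ∈ s, ∑ j ∈ s, M i j)
        + a i0 * (∑ j ∈ s, b' j * ∑ i ∈ s, M i j)
        + b i0 * (∑ i ∈ s, a' i * ∑ j ∈ s, M i j)
        + ∑ i ∈ s, ∑ j ∈ s, M i j * (a' i * b' j) := by
    have e2 : a i0 * (∑ j ∈ s, b' j * ∑ i ∈ s, M i j)
        = ∑ i ∈ s, ∑ j ∈ s, a i0 * (b' j * M i j) := by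
      rw [Finset.sum_comm, Finset.mul_sum]
      refine Finset.sum_congr rfl fun j _ => ?_
      rw [Finset.mul_sum, Finset.mul_sum]
    have e3 : b i0 * (∑ i ∈ s, a' i * ∑ j ∈ s, M i j)
        = ∑ i ∈ s, ∑ j ∈ s, b i0 * (a' i * M i j) := by
      rw [Finset.mul_sum]
      refine Finset.sum_congr rfl fun i _ => ?_
      rw [Finset.mul_sum, Finset.mul_sum]
    have e1 : (a i0 * b i0) * (∑ i ∈ s, ∑ j ∈ s, M i j)
        = ∑ i ∈ s, ∑ j ∈ s, (a i0 * b i0) * M i j := by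
      rw [Finset.mul_sum]
      exact Finset.sum_congr rfl fun i _ => Finset.mul_sum _ _ _
    rw [e1, e2, e3, ← Finset.sum_add_distrib, ← Finset.sum_add_distrib,
      ← Finset.sum_add_distrib]
    refine Finset.sum_congr rfl fun i _ => ?_
    rw [← Finset.sum_add_distrib, ← Finset.sum_add_distrib, ← Finset.sum_add_distrib]
    refine Finset.sum_congr rfl fun j _ => ?_
    simp only [ha', hb']
    ring
  have h4eq : ∑ i ∈ s, ∑ j ∈ s, M i j * (a' i * b' j)
      = ∑ i ∈ s.erase i0, ∑ j ∈ s.erase i0, M i j * (a' i * b' j) := by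
    have stepj : ∀ i, ∑ j ∈ s, M i j * (a' i * b' j)
        = ∑ j ∈ s.erase i0, M i j * (a' i * b' j) := by
      intro i
      refine (Finset.sum_subset (s.erase_subset i0) fun j hj hj' => ?_).symm
      have : j = i0 := by
        by_contra hc
        exact hj' (Finset.mem_erase.mpr ⟨hc, hj⟩)
      simp [this, hb']
    rw [Finset.sum_congr rfl fun i _ => stepj i]
    refine (Finset.sum_subset (s.erase_subset i0) fun i hi hi' => ?_).symm
    have : i = i0 := by
      by_contra hc
      exact hi' (Finset.mem_erase.mpr ⟨hc, hi⟩)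
    subst this
    refine Finset.sum_eq_zero fun j _ => by simp [ha']
  have hsub : s.erase i0 ⊂ s := Finset.erase_ssubset hi0
  have hmem : ∀ i ∈ s.erase i0, i ∈ s ∧ i ≠ i0 := fun i hi =>
    ⟨(Finset.mem_erase.mp hi).2, (Finset.mem_erase.mp hi).1⟩
  have h4 : 0 ≤ ∑ i ∈ s.erase i0, ∑ j ∈ s.erase i0, M i j * (a' i * b' j) := by
    refine ih _ hsub a' b' ?_ ?_ ?_ ?_ ?_ ?_
    · intro i hi j hj hne'
      exact hZ i (hmem i hi).1 j (hmem j hj).1 hne'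
    · intro i hi
      obtain ⟨his, hine⟩ := hmem i hi
      have hsum := Finset.sum_erase_add s (fun j => M i j) hi0
      have hM0 : M i i0 ≤ 0 := hZ i his i0 hi0 hine
      have := hrow i his
      linarith
    · intro j hj
      obtain ⟨hjs, hjne⟩ := hmem j hj
      have hsum := Finset.sum_erase_add s (fun i => M i j) hi0
      have hM0 : M i0 j ≤ 0 := hZ i0 hi0 j hjs (Ne.symm hjne)
      have := hcol j hjs
      linarith
    · intro i hi
      have := hai0 i (hmem i hi).1
      simp only [ha']
      linarith
    · intro i hi
      have := hbi0 i (hmem i hi).1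
      simp only [hb']
      linarith
    · intro i hi j hj
      have := hsim i (hmem i hi).1 j (hmem j hj).1
      simp only [ha', hb']
      convert this using 2 <;> ring
  have h1 : 0 ≤ (a i0 * b i0) * (∑ i ∈ s, ∑ j ∈ s, M i j) :=
    mul_nonneg (mul_nonneg (ha i0 hi0) (hb i0 hi0))
      (Finset.sum_nonneg fun i hi => hrow i hi)
  have h2 : 0 ≤ a i0 * (∑ j ∈ s, b' j * ∑ i ∈ s, M i j) := by
    refine mul_nonneg (ha i0 hi0) (Finset.sum_nonneg fun j hj => ?_)
    refine mul_nonneg ?_ (hcol j hj)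
    have := hbi0 j hj
    simp only [hb']
    linarith
  have h3 : 0 ≤ b i0 * (∑ i ∈ s, a' i * ∑ j ∈ s, M i j) := by
    refine mul_nonneg (hb i0 hi0) (Finset.sum_nonneg fun i hi => ?_)
    refine mul_nonneg ?_ (hrow i hi)
    have := hai0 i hi
    simp only [ha']
    linarith
  rw [decomp, h4eq]
  linarith

/-- Static O'Shea–Zames–Falb multiplier inequality for slope-restricted repeated
nonlinearities and doubly hyperdominant `M`. -/
theorem stmt_2 {m : ℕ} (μ ν : ℝ) (hμ : μ ≤ 0) (hν : 0 ≤ ν)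
    (φ : ℝ → ℝ) (h0 : φ 0 = 0)
    (hslope : ∀ p q : ℝ, p ≠ q → μ ≤ (φ p - φ q) / (p - q) ∧ (φ p - φ q) / (p - q) ≤ ν)
    (M : Matrix (Fin m) (Fin m) ℝ)
    (hZ : ∀ i j, i ≠ j → M i j ≤ 0)
    (hrow : ∀ i, 0 ≤ ∑ j, M i j)
    (hcol : ∀ j, 0 ≤ ∑ i, M i j)
    (ζ : Fin m → ℝ) :
    0 ≤ (ν • ζ - fun i => φ (ζ i)) ⬝ᵥ M.mulVec ((fun i => φ (ζ i)) - μ • ζ)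
      + ((fun i => φ (ζ i)) - μ • ζ) ⬝ᵥ Mᵀ.mulVec (ν • ζ - fun i => φ (ζ i)) := by
  classical
  set a : Fin m → ℝ := fun i => ν * ζ i - φ (ζ i) with ha
  set b : Fin m → ℝ := fun i => φ (ζ i) - μ * ζ i with hb
  have key : ∀ p q : ℝ, 0 ≤ ((ν * p - φ p) - (ν * q - φ q)) * ((φ p - μ * p) - (φ q - μ * q)) := by
    intro p q
    rcases eq_or_ne p q with h | h
    · simp [h]
    · obtain ⟨h1, h2⟩ := hslope p q h
      have hpq : p - q ≠ 0 := sub_ne_zero.mpr h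
      have hs : φ p - φ q = (φ p - φ q) / (p - q) * (p - q) := by field_simp
      set s := (φ p - φ q) / (p - q) with hsdef
      have h3 : 0 ≤ (ν - s) * (s - μ) :=
        mul_nonneg (sub_nonneg.mpr h2) (sub_nonneg.mpr h1)
      have goal_eq : ((ν * p - φ p) - (ν * q - φ q)) * ((φ p - μ * p) - (φ q - μ * q))
          = (ν - s) * (s - μ) * (p - q) ^ 2 := by
        have hφ : φ p = φ q + s * (p - q) := by linarith [hs]
        rw [hφ]; ring
      rw [goal_eq]
      exact mul_nonneg h3 (sq_nonneg _)
  have hab : ∀ i, 0 ≤ a i * b i := by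
    intro i
    have := key (ζ i) 0
    simpa [h0, ha, hb] using this
  have hcross : ∀ i j, 0 ≤ (a i - a j) * (b i - b j) := by
    intro i j
    have := key (ζ i) (ζ j)
    simpa [ha, hb] using this
  have hA : (ν • ζ - fun i => φ (ζ i)) = a := by
    funext i; simp [ha, Pi.smul_apply, smul_eq_mul]
  have hB : ((fun i => φ (ζ i)) - μ • ζ) = b := by
    funext i; simp [hb, Pi.smul_apply, smul_eq_mul]
  rw [hA, hB]
  have hsym : b ⬝ᵥ Mᵀ.mulVec a = a ⬝ᵥ M.mulVec b := by
    rw [Matrix.mulVec_transpose, Matrix.dotProduct_mulVec, dotProduct_comm]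
  rw [hsym]
  have hexp : a ⬝ᵥ M.mulVec b = ∑ i, ∑ j, M i j * (a i * b j) := by
    simp only [dotProduct, mulVec, Finset.mul_sum]
    exact Finset.sum_congr rfl fun i _ => Finset.sum_congr rfl fun j _ => by ring
  rw [hexp]
  set p : Fin m → Prop := fun i => 0 ≤ a i ∧ 0 ≤ b i with hp
  set H : Finset (Fin m) := Finset.univ.filter p with hHdef
  set L : Finset (Fin m) := Finset.univ.filter (fun i => ¬ p i) with hLdef
  have hmemH : ∀ i ∈ H, 0 ≤ a i ∧ 0 ≤ b i := fun i hi => (Finset.mem_filter.mp hi).2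
  have hmemL : ∀ i ∈ L, a i ≤ 0 ∧ b i ≤ 0 := by
    intro i hi
    have hnp : ¬ p i := (Finset.mem_filter.mp hi).2
    have h := hab i
    rcases not_and_or.mp hnp with h' | h' <;> push_neg at h'
    · exact ⟨le_of_lt h', by nlinarith⟩
    · exact ⟨by nlinarith, le_of_lt h'⟩
  have hHL : ∀ i ∈ H, ∀ j ∈ L, i ≠ j := by
    rintro i hi j hj rfl
    exact (Finset.mem_filter.mp hj).2 (Finset.mem_filter.mp hi).2
  have hsplit : (∑ i, ∑ j, M i j * (a i * b j))
      = (∑ i ∈ H, ∑ j ∈ H, M i j * (a i * b j)) + (∑ i ∈ H, ∑ j ∈ L, M i j * (a i * b j))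
        + ((∑ i ∈ L, ∑ j ∈ H, M i j * (a i * b j)) + (∑ i ∈ L, ∑ j ∈ L, M i j * (a i * b j))) := by
    rw [← Finset.sum_filter_add_sum_filter_not Finset.univ p
      (fun i => ∑ j, M i j * (a i * b j))]
    congr 1
    · rw [← Finset.sum_add_distrib]
      exact Finset.sum_congr rfl fun i _ =>
        (Finset.sum_filter_add_sum_filter_not Finset.univ p _).symm
    · rw [← Finset.sum_add_distrib]
      exact Finset.sum_congr rfl fun i _ =>
        (Finset.sum_filter_add_sum_filter_not Finset.univ p _).symm
  rw [hsplit]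
  have hrowH : ∀ i ∈ H, 0 ≤ ∑ j ∈ H, M i j := by
    intro i hi
    have hsum := Finset.sum_filter_add_sum_filter_not Finset.univ p (fun j => M i j)
    have hL0 : ∑ j ∈ L, M i j ≤ 0 :=
      Finset.sum_nonpos fun j hj => hZ i j (hHL i hi j hj)
    have := hrow i
    rw [hHdef, hLdef] at *
    linarith [hsum]
  have hcolH : ∀ j ∈ H, 0 ≤ ∑ i ∈ H, M i j := by
    intro j hj
    have hsum := Finset.sum_filter_add_sum_filter_not Finset.univ p (fun i => M i j)
    have hL0 : ∑ i ∈ L, M i j ≤ 0 :=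
      Finset.sum_nonpos fun i hi => hZ i j (Ne.symm (hHL j hj i hi))
    have := hcol j
    rw [hHdef, hLdef] at *
    linarith [hsum]
  have hrowL : ∀ i ∈ L, 0 ≤ ∑ j ∈ L, M i j := by
    intro i hi
    have hsum := Finset.sum_filter_add_sum_filter_not Finset.univ p (fun j => M i j)
    have hH0 : ∑ j ∈ H, M i j ≤ 0 :=
      Finset.sum_nonpos fun j hj => hZ i j (Ne.symm (hHL j hj i hi))
    have := hrow i
    rw [hHdef, hLdef] at *
    linarith [hsum]
  have hcolL : ∀ j ∈ L, 0 ≤ ∑ i ∈ L, M i j := by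
    intro j hj
    have hsum := Finset.sum_filter_add_sum_filter_not Finset.univ p (fun i => M i j)
    have hH0 : ∑ i ∈ H, M i j ≤ 0 :=
      Finset.sum_nonpos fun i hi => hZ i j (hHL i hi j hj)
    have := hcol j
    rw [hHdef, hLdef] at *
    linarith [hsum]
  have hHH : 0 ≤ ∑ i ∈ H, ∑ j ∈ H, M i j * (a i * b j) := by
    refine zf_block M H a b (fun i _ j _ h => hZ i j h) hrowH hcolH
      (fun i hi => (hmemH i hi).1) (fun i hi => (hmemH i hi).2)
      (fun i _ j _ => hcross i j)
  have hLL : 0 ≤ ∑ i ∈ L, ∑ j ∈ L, M i j * (a i * b j) := by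
    have := zf_block M L (fun i => -a i) (fun i => -b i)
      (fun i _ j _ h => hZ i j h) hrowL hcolL
      (fun i hi => by simpa using (hmemL i hi).1)
      (fun i hi => by simpa using (hmemL i hi).2)
      (fun i _ j _ => by
        show (0:ℝ) ≤ (-a i - -a j) * (-b i - -b j)
        nlinarith [hcross i j])
    simpa using this
  have hHLterm : 0 ≤ ∑ i ∈ H, ∑ j ∈ L, M i j * (a i * b j) := by
    refine Finset.sum_nonneg fun i hi => Finset.sum_nonneg fun j hj => ?_
    have hM : M i j ≤ 0 := hZ i j (hHL i hi j hj)
    have h1 : 0 ≤ a i := (hmemH i hi).1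
    have h2 : b j ≤ 0 := (hmemL j hj).2
    nlinarith [mul_nonneg (neg_nonneg.mpr hM) (mul_nonneg h1 (neg_nonneg.mpr h2))]
  have hLHterm : 0 ≤ ∑ i ∈ L, ∑ j ∈ H, M i j * (a i * b j) := by
    refine Finset.sum_nonneg fun i hi => Finset.sum_nonneg fun j hj => ?_
    have hM : M i j ≤ 0 := hZ i j (Ne.symm (hHL j hj i hi))
    have h1 : a i ≤ 0 := (hmemL i hi).1
    have h2 : 0 ≤ b j := (hmemH j hj).2
    nlinarith [mul_nonneg (neg_nonneg.mpr hM) (mul_nonneg (neg_nonneg.mpr h1) h2)]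
  linarith
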